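/- Let L_1,…,L_l be pairwise disjoint compact subintervals of a compact interval L ⊂ I and f : I → I a C² map with f^k(L_i) = L and f^k|_{L_i} injective for each i, and suppose |(f^k)′(x)| ≤ e^{k(Λ+ε)} for all x ∈ ⊔_i L_i. Then for every n ≥ 1, the set B_n := ∩_{j=0}^{n−1} f^{−jk}(⊔_{i=1}^l L_i) satisfies m(B_n) ≥ l^n e^{−nk(Λ+ε)} m(L), where m is Lebesgue measure. -/

import Mathlib

open MeasureTheory Real Filter

/-- Horseshoe measure estimate. If `L_1,…,L_l` are pairwise disjoint compact
subintervals of the compact interval `L = [u,v] ⊆ I`, `f^k(L_i) = L` with `f^k` injective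
on each `L_i`, and `|(f^k)′| ≤ e^{k(Λ+ε)}` on `⊔_i L_i`, then
`B_n = ∩_{j=0}^{n−1} f^{−jk}(⊔_i L_i)` satisfies `m(B_n) ≥ l^n e^{−nk(Λ+ε)} m(L)`. -/
theorem stmt9 (f : ℝ → ℝ) (hf : ContDiff ℝ 2 f)
    (k : ℕ) (hk : 1 ≤ k) (l : ℕ) (hl : 1 ≤ l)
    (u v : ℝ) (huv : u ≤ v)
    (Li : Fin l → Set ℝ)
    (hint : ∀ i, ∃ ui vi : ℝ, ui ≤ vi ∧ Li i = Set.Icc ui vi)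
    (hsub : ∀ i, Li i ⊆ Set.Icc u v)
    (hdisj : Pairwise (fun i j => Disjoint (Li i) (Li j)))
    (himg : ∀ i, f^[k] '' Li i = Set.Icc u v)
    (hinj : ∀ i, Set.InjOn f^[k] (Li i))
    (Λ ε : ℝ)
    (hderiv : ∀ x ∈ ⋃ i, Li i, |deriv f^[k] x| ≤ Real.exp ((k : ℝ) * (Λ + ε))) :
    ∀ n : ℕ, 1 ≤ n →
      ENNReal.ofReal ((l : ℝ) ^ n * Real.exp (-((n : ℝ) * k) * (Λ + ε)) *
          (volume (Set.Icc u v)).toReal) ≤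
        volume (⋂ j ∈ Finset.range n, f^[j * k] ⁻¹' (⋃ i, Li i)) := by
  intro n hn
  set g : ℝ → ℝ := f^[k] with hg
  set C : ℝ := Real.exp ((k : ℝ) * (Λ + ε)) with hCdef
  have hCpos : (0:ℝ) < C := Real.exp_pos _
  set U : Set ℝ := ⋃ i, Li i with hU
  have hgdiff : Differentiable ℝ g :=
    (hf.differentiable (by norm_num)).iterate k
  have hgcont : Continuous g := hgdiff.continuous
  have hLimeas : ∀ i, MeasurableSet (Li i) := by
    intro i
    obtain ⟨ui, vi, _, h⟩ := hint i
    rw [h]; exact measurableSet_Icc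
  have hUmeas : MeasurableSet U := MeasurableSet.iUnion hLimeas
  have hUsub : U ⊆ Set.Icc u v := Set.iUnion_subset hsub
  -- key step: pulling back a measurable subset of [u,v]
  have key : ∀ S : Set ℝ, MeasurableSet S → S ⊆ Set.Icc u v →
      (l : ENNReal) * (ENNReal.ofReal C⁻¹ * volume S) ≤ volume (U ∩ g ⁻¹' S) := by
    intro S hSmeas hSsub
    set A : Fin l → Set ℝ := fun i => Li i ∩ g ⁻¹' S with hA
    have hAmeas : ∀ i, MeasurableSet (A i) :=
      fun i => (hLimeas i).inter (hSmeas.preimage hgcont.measurable)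
    have hAsub : ∀ i, A i ⊆ Li i := fun i => Set.inter_subset_left
    have himgA : ∀ i, g '' A i = S := by
      intro i
      rw [hA]
      rw [Set.image_inter_preimage, himg i, Set.inter_eq_self_of_subset_right hSsub]
    -- measure bound on each piece
    have hup : ∀ i, volume S ≤ ENNReal.ofReal C * volume (A i) := by
      intro i
      have hder : ∀ x ∈ A i, HasFDerivWithinAt g
          ((1 : ℝ →L[ℝ] ℝ).smulRight (deriv g x)) (A i) x :=
        fun x _ => (hgdiff x).hasDerivAt.hasFDerivAt.hasFDerivWithinAt
      have h1 : volume (g '' A i) ≤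
          ∫⁻ x in A i, ENNReal.ofReal |((1 : ℝ →L[ℝ] ℝ).smulRight (deriv g x)).det| :=
        addHaar_image_le_lintegral_abs_det_fderiv volume (hAmeas i) hder
      have h2 : (∫⁻ x in A i, ENNReal.ofReal |((1 : ℝ →L[ℝ] ℝ).smulRight (deriv g x)).det|)
          ≤ ENNReal.ofReal C * volume (A i) := by
        have : (∫⁻ x in A i, ENNReal.ofReal |((1 : ℝ →L[ℝ] ℝ).smulRight (deriv g x)).det|)
            ≤ ∫⁻ _ in A i, ENNReal.ofReal C := by
          apply setLIntegral_mono' (hAmeas i)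
          intro x hx
          apply ENNReal.ofReal_le_ofReal
          rw [ContinuousLinearMap.smulRight_one_eq_toSpanSingleton, ContinuousLinearMap.det_toSpanSingleton]
          exact hderiv x (Set.mem_iUnion.2 ⟨i, hAsub i hx⟩)
        simpa [setLIntegral_const, mul_comm] using this
      calc volume S = volume (g '' A i) := by rw [himgA i]
        _ ≤ _ := h1
        _ ≤ _ := h2
    have hlow : ∀ i, ENNReal.ofReal C⁻¹ * volume S ≤ volume (A i) := by
      intro i
      calc ENNReal.ofReal C⁻¹ * volume S
          ≤ ENNReal.ofReal C⁻¹ * (ENNReal.ofReal C * volume (A i)) :=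
            mul_le_mul_right (hup i) _
        _ = volume (A i) := by
            rw [← mul_assoc, ← ENNReal.ofReal_mul (by positivity),
              inv_mul_cancel₀ hCpos.ne', ENNReal.ofReal_one, one_mul]
    have hdisjA : Pairwise (Function.onFun Disjoint A) :=
      fun i j hij => ((hdisj hij).mono (hAsub i) (hAsub j))
    have hunion : U ∩ g ⁻¹' S = ⋃ i, A i := by
      rw [hU, Set.iUnion_inter]
    rw [hunion, measure_iUnion hdisjA hAmeas]
    calc (l : ENNReal) * (ENNReal.ofReal C⁻¹ * volume S)
        = ∑' _ : Fin l, ENNReal.ofReal C⁻¹ * volume S := by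
          rw [tsum_fintype, Finset.sum_const, Finset.card_univ, Fintype.card_fin,
            nsmul_eq_mul]
      _ ≤ ∑' i, volume (A i) := ENNReal.tsum_le_tsum hlow
  -- the sets B_m
  set B : ℕ → Set ℝ := fun m => ⋂ j ∈ Finset.range m, f^[j * k] ⁻¹' U with hB
  have hBmeas : ∀ m, MeasurableSet (B m) := by
    intro m
    apply MeasurableSet.biInter (Finset.range m).countable_toSet
    intro j _
    exact hUmeas.preimage ((hf.differentiable (by norm_num)).iterate (j*k)).continuous.measurable
  have hBsucc : ∀ m, B (m+1) = U ∩ g ⁻¹' (B m) := by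
    intro m
    ext x
    simp only [hB, Set.mem_iInter, Finset.mem_range, Set.mem_inter_iff, Set.mem_preimage]
    constructor
    · intro h
      refine ⟨by simpa using h 0 (Nat.succ_pos m), fun j hj => ?_⟩
      have := h (j+1) (Nat.succ_lt_succ hj)
      simpa [add_mul, Function.iterate_add_apply] using this
    · rintro ⟨h0, h1⟩ j hj
      cases j with
      | zero => simpa using h0
      | succ j =>
          have := h1 j (Nat.lt_of_succ_lt_succ hj)
          simpa [add_mul, Function.iterate_add_apply] using this
  have hBsubU : ∀ m, B (m+1) ⊆ Set.Icc u v := by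
    intro m
    rw [hBsucc m]
    exact Set.inter_subset_left.trans hUsub
  -- main induction
  have main : ∀ m : ℕ,
      ENNReal.ofReal ((l : ℝ) ^ m * Real.exp (-((m : ℝ) * k) * (Λ + ε)) *
        (volume (Set.Icc u v)).toReal) ≤ volume (B m ∩ Set.Icc u v) := by
    intro m
    induction m with
    | zero =>
        simp only [hB, Finset.range_zero, Finset.notMem_empty, Set.iInter_of_empty,
          Set.iInter_univ, Set.univ_inter, pow_zero, Nat.cast_zero, zero_mul, neg_zero,
          Real.exp_zero, one_mul]
        rw [Real.volume_Icc, ENNReal.toReal_ofReal (by linarith)]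
    | succ m ih =>
        have hstep := key (B m ∩ Set.Icc u v)
          ((hBmeas m).inter measurableSet_Icc) Set.inter_subset_right
        have hsubset : U ∩ g ⁻¹' (B m ∩ Set.Icc u v) ⊆ B (m+1) ∩ Set.Icc u v := by
          intro x hx
          refine ⟨?_, hUsub hx.1⟩
          rw [hBsucc m]
          exact ⟨hx.1, hx.2.1⟩
        have harith : ENNReal.ofReal ((l : ℝ) ^ (m+1) *
            Real.exp (-(((m+1 : ℕ) : ℝ) * k) * (Λ + ε)) * (volume (Set.Icc u v)).toReal)
            = (l : ENNReal) * (ENNReal.ofReal C⁻¹ *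
              ENNReal.ofReal ((l : ℝ) ^ m * Real.exp (-((m : ℝ) * k) * (Λ + ε)) *
                (volume (Set.Icc u v)).toReal)) := by
          have hexp : Real.exp (-(((m+1 : ℕ) : ℝ) * k) * (Λ + ε)) =
              C⁻¹ * Real.exp (-((m : ℝ) * k) * (Λ + ε)) := by
            rw [hCdef, ← Real.exp_neg, ← Real.exp_add]
            congr 1
            push_cast
            ring
          rw [hexp]
          rw [← ENNReal.ofReal_natCast l, ← ENNReal.ofReal_mul (by positivity),
            ← ENNReal.ofReal_mul (by positivity)]
          congr 1
          ring
        calc ENNReal.ofReal ((l : ℝ) ^ (m+1) *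
              Real.exp (-(((m+1 : ℕ) : ℝ) * k) * (Λ + ε)) * (volume (Set.Icc u v)).toReal)
            = (l : ENNReal) * (ENNReal.ofReal C⁻¹ *
              ENNReal.ofReal ((l : ℝ) ^ m * Real.exp (-((m : ℝ) * k) * (Λ + ε)) *
                (volume (Set.Icc u v)).toReal)) := harith
          _ ≤ (l : ENNReal) * (ENNReal.ofReal C⁻¹ * volume (B m ∩ Set.Icc u v)) := by
              exact mul_le_mul_right (mul_le_mul_right ih _) _
          _ ≤ volume (U ∩ g ⁻¹' (B m ∩ Set.Icc u v)) := hstep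
          _ ≤ volume (B (m+1) ∩ Set.Icc u v) := measure_mono hsubset
  exact (main n).trans (measure_mono Set.inter_subset_left)
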